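/- Let G be a finite connected chordal simple graph. Then G is isomorphic to BF(T,w) for some finite tree T and edge-weight function w : E(T) → ℕ if and only if G contains none of the following as an induced subgraph: the complete graph K_4, the gem, the kite, and the net. -/

import Mathlib

set_option maxHeartbeats 1600000
set_option linter.unusedSectionVars false
set_option linter.unusedVariables false


open scoped Classical

noncomputable section

namespace ChauHaMaithani

variable {V : Type*}

/-- The lcm of a finite set of monomials (exponent vectors): pointwise maximum. -/
def mlcm (σ : Finset (V → ℕ)) : V → ℕ := fun v => σ.sup fun g => g v

/-- `m` is a bridge of `σ`: `m ∈ σ` and dropping `m` does not change the lcm. -/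
def IsBridge (σ : Finset (V → ℕ)) (m : V → ℕ) : Prop :=
  m ∈ σ ∧ mlcm (σ.erase m) = mlcm σ

/-- `m` is a gap of `σ`: `m ∉ σ` and adding `m` does not change the lcm. -/
def IsGap (σ : Finset (V → ℕ)) (m : V → ℕ) : Prop :=
  m ∉ σ ∧ mlcm (insert m σ) = mlcm σ

/-- A total order `≻` on monomials is encoded by a ranking function `ord`:
`m ≻ m'` iff `ord m' < ord m` (injectivity on the generating set is assumed separately).
`m` is a true gap of `σ` if it is a gap and every bridge of `σ ∪ {m}` dominated by `m`
is already a bridge of `σ`. -/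
def IsTrueGap (ord : (V → ℕ) → ℕ) (σ : Finset (V → ℕ)) (m : V → ℕ) : Prop :=
  IsGap σ m ∧ ∀ m', IsBridge (insert m σ) m' → ord m' < ord m → IsBridge σ m'

/-- `σ` is type-1: it has a true gap (in `M`) dominating none of its bridges. -/
def Type1 (M : Finset (V → ℕ)) (ord : (V → ℕ) → ℕ) (σ : Finset (V → ℕ)) : Prop :=
  ∃ m ∈ M, IsTrueGap ord σ m ∧ ∀ b, IsBridge σ b → ¬ ord b < ord m

/-- `σ` is potentially-type-2: it has a bridge dominating none of its true gaps. -/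
def PotType2 (M : Finset (V → ℕ)) (ord : (V → ℕ) → ℕ) (σ : Finset (V → ℕ)) : Prop :=
  ∃ b, IsBridge σ b ∧ ∀ m ∈ M, IsTrueGap ord σ m → ¬ ord m < ord b

/-- `b` is the `≻`-smallest bridge of `σ`. -/
def IsSBridge (ord : (V → ℕ) → ℕ) (σ : Finset (V → ℕ)) (b : V → ℕ) : Prop :=
  IsBridge σ b ∧ ∀ b', IsBridge σ b' → ord b ≤ ord b'

/-- `σ` is type-2. -/
def Type2 (M : Finset (V → ℕ)) (ord : (V → ℕ) → ℕ) (σ : Finset (V → ℕ)) : Prop :=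
  PotType2 M ord σ ∧
    ∀ σ' : Finset (V → ℕ), σ' ⊆ M → σ' ≠ σ → PotType2 M ord σ' →
      ∀ b b', IsSBridge ord σ b → IsSBridge ord σ' b' →
        σ'.erase b' = σ.erase b → ord b < ord b'

/-- `M` (the minimal generating set of a monomial ideal) is bridge-friendly w.r.t. `ord`:
every potentially-type-2 subset is type-2. -/
def BridgeFriendlyWrt (M : Finset (V → ℕ)) (ord : (V → ℕ) → ℕ) : Prop :=
  ∀ σ ⊆ M, PotType2 M ord σ → Type2 M ord σ

/-- `M` is bridge-friendly: bridge-friendly w.r.t. some total order on `M`. -/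
def BridgeFriendly (M : Finset (V → ℕ)) : Prop :=
  ∃ ord : (V → ℕ) → ℕ, Set.InjOn ord M ∧ BridgeFriendlyWrt M ord

/-- `σ = {m_1 ≻ ⋯ ≻ m_k} ⊆ M` is Lyubeznik-critical w.r.t. `ord`: there is no `m ∈ M` with
`m_t ≻ m` and `m ∣ lcm(m_1, …, m_t)` for some `1 < t ≤ k`. -/
def LyubCritical (M : Finset (V → ℕ)) (ord : (V → ℕ) → ℕ) (σ : Finset (V → ℕ)) : Prop :=
  σ ⊆ M ∧ ¬ ∃ m ∈ M, ∃ t ∈ σ, (∃ u ∈ σ, ord t < ord u) ∧ ord m < ord t ∧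
      ∀ v, m v ≤ mlcm (σ.filter fun g => ord t ≤ ord g) v

/-- `M` is Lyubeznik: for some total order on `M`, no Lyubeznik-critical subset has a
bridge (equivalently, the associated Lyubeznik resolution is minimal). -/
def IsLyubeznik (M : Finset (V → ℕ)) : Prop :=
  ∃ ord : (V → ℕ) → ℕ, Set.InjOn ord M ∧
    ∀ σ : Finset (V → ℕ), LyubCritical M ord σ → ∀ b, ¬ IsBridge σ b

/-- The quadratic monomial `xy` attached to an edge `e = {x,y}`. -/
def edgeMon (e : Sym2 V) : V → ℕ := fun v => if v ∈ e then 1 else 0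

/-- `mingens(I(G))`: the edge monomials of `G`. -/
def edgeGens [Fintype V] (G : SimpleGraph V) : Finset (V → ℕ) :=
  (Finset.univ.filter fun e : Sym2 V => e ∈ G.edgeSet).image edgeMon

/-- `mingens(I(G)^n)`: the monomials that are products of `n` edges of `G`. -/
def edgePowGens [Fintype V] (G : SimpleGraph V) (n : ℕ) : Finset (V → ℕ) :=
  (Finset.univ.filter fun f : Fin n → Sym2 V => ∀ i, f i ∈ G.edgeSet).image
    fun f => ∑ i, edgeMon (f i)

/-- A graph is chordal if it contains no induced cycle of length at least 4. -/
def Chordal (G : SimpleGraph V) : Prop :=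
  ∀ n, 4 ≤ n → IsEmpty (SimpleGraph.cycleGraph n ↪g G)


/-- Vertex type of the graph `L(a,b,c)`: `Sum.inl 0` is `x`, `Sum.inl 1` is `y`,
and the remaining summands are the leaves `x_i`, the leaves `y_j`, and the
triangle tips `z_k`. -/
abbrev LV (a b c : ℕ) := Fin 2 ⊕ (Fin a ⊕ Fin b ⊕ Fin c)

/-- The graph `L(a,b,c)`: `c` triangles glued along the common edge `{x,y}`, with
`a` leaves attached to `x` and `b` leaves attached to `y`. -/
def LGraph (a b c : ℕ) : SimpleGraph (LV a b c) :=
  SimpleGraph.fromRel fun u v =>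
    (u = Sum.inl 0 ∧ v = Sum.inl 1) ∨
    (∃ i, u = Sum.inl 0 ∧ v = Sum.inr (Sum.inl i)) ∨
    (∃ j, u = Sum.inl 1 ∧ v = Sum.inr (Sum.inr (Sum.inl j))) ∨
    (∃ k, (u = Sum.inl 0 ∨ u = Sum.inl 1) ∧ v = Sum.inr (Sum.inr (Sum.inr k)))

/-- The graph `BF(T,w)`: attach `w(e)` new triangles along each edge `e` of `T`. -/
def BFGraph {VT : Type} (T : SimpleGraph VT) (w : T.edgeSet → ℕ) :
    SimpleGraph (VT ⊕ (Σ e : T.edgeSet, Fin (w e))) :=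
  SimpleGraph.fromRel fun u v =>
    (∃ a b, u = Sum.inl a ∧ v = Sum.inl b ∧ T.Adj a b) ∨
    (∃ (a : VT) (e : T.edgeSet) (i : Fin (w e)), u = Sum.inl a ∧ v = Sum.inr ⟨e, i⟩ ∧
      a ∈ (e : Sym2 VT))

/-- The kite graph: the diamond (`K₄` minus the edge `{2,3}`) together with a pendant
vertex `4` attached to the degree-two vertex `2`. -/
def kite : SimpleGraph (Fin 5) :=
  SimpleGraph.fromEdgeSet {s(0,1), s(0,2), s(0,3), s(1,2), s(1,3), s(2,4)}

/-- The gem graph: the path `0-1-2-3` together with a vertex `4` adjacent to all of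
`0,1,2,3`. -/
def gem : SimpleGraph (Fin 5) :=
  SimpleGraph.fromEdgeSet {s(0,1), s(1,2), s(2,3), s(0,4), s(1,4), s(2,4), s(3,4)}

/-- The tadpole graph: the triangle `0,1,2` with a path `0-3-4` of length 2 attached. -/
def tadpole : SimpleGraph (Fin 5) :=
  SimpleGraph.fromEdgeSet {s(0,1), s(1,2), s(0,2), s(0,3), s(3,4)}

/-- The butterfly graph: two triangles `0,1,2` and `0,3,4` sharing the vertex `0`. -/
def butterfly : SimpleGraph (Fin 5) :=
  SimpleGraph.fromEdgeSet {s(0,1), s(1,2), s(0,2), s(0,3), s(3,4), s(0,4)}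

/-- The net graph: the triangle `0,1,2` with pendant vertices `3,4,5` attached to
`0,1,2` respectively. -/
def net : SimpleGraph (Fin 6) :=
  SimpleGraph.fromEdgeSet {s(0,1), s(1,2), s(0,2), s(0,3), s(1,4), s(2,5)}



section WalkAux
open SimpleGraph


variable {W : Type*} [DecidableEq W] {H : SimpleGraph W}

theorem pathGetVertInj {u v : W} {p : H.Walk u v} (hp : p.IsPath) :
    ∀ i j, i ≤ p.length → j ≤ p.length → p.getVert i = p.getVert j → i = j := by
  induction p with
  | nil => intro i j hi hj _; simp at hi hj; omega
  | cons h q ih =>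
    intro i j hi hj hij
    rw [SimpleGraph.Walk.cons_isPath_iff] at hp
    match i, j with
    | 0, 0 => rfl
    | 0, (j+1) =>
      exfalso
      rw [Walk.getVert_zero, Walk.getVert_cons_succ] at hij
      exact hp.2 (Walk.mem_support_iff_exists_getVert.mpr ⟨j, hij.symm, by
        simp [Walk.length_cons] at hj; omega⟩)
    | (i+1), 0 =>
      exfalso
      rw [Walk.getVert_zero, Walk.getVert_cons_succ] at hij
      exact hp.2 (Walk.mem_support_iff_exists_getVert.mpr ⟨i, hij, by
        simp [Walk.length_cons] at hi; omega⟩)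
    | (i+1), (j+1) =>
      rw [Walk.getVert_cons_succ, Walk.getVert_cons_succ] at hij
      simp [Walk.length_cons] at hi hj
      have := ih hp.1 i j (by omega) (by omega) hij
      omega

theorem takeUntilGetVert {u v t : W} (p : H.Walk u v) (h : t ∈ p.support) (i : ℕ)
    (hi : i ≤ (p.takeUntil t h).length) :
    (p.takeUntil t h).getVert i = p.getVert i := by
  conv_rhs => rw [← Walk.take_spec p h]
  rw [Walk.getVert_append]
  rcases lt_or_eq_of_le hi with h' | h'
  · simp [h']
  · subst h'
    simp [Walk.getVert_length]

theorem takeUntilLength {u v t : W} {p : H.Walk u v} (hp : p.IsPath) (j : ℕ)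
    (hj : j ≤ p.length) (ht : p.getVert j = t) (h : t ∈ p.support) :
    (p.takeUntil t h).length = j := by
  subst ht
  have h1 : (p.takeUntil (p.getVert j) h).length ≤ p.length := Walk.length_takeUntil_le p h
  have h2 : (p.takeUntil (p.getVert j) h).getVert (p.takeUntil (p.getVert j) h).length
      = p.getVert j := Walk.getVert_length _
  rw [takeUntilGetVert p h _ le_rfl] at h2
  exact pathGetVertInj hp _ _ h1 hj h2

theorem lengthDropUntil {u v t : W} (p : H.Walk u v) (h : t ∈ p.support) :
    (p.takeUntil t h).length + (p.dropUntil t h).length = p.length := by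
  rw [← Walk.length_append, Walk.take_spec]

/-- main cycle analysis: a graph with no triangles and no induced cycles has no
"edge + path of length ≥ 2" configuration. -/
theorem noCycleConfig
    (htri : ∀ x y z : W, H.Adj x y → H.Adj y z → H.Adj x z → False)
    (hind : ∀ n, 4 ≤ n → IsEmpty (SimpleGraph.cycleGraph n ↪g H)) :
    ∀ m, ∀ (u b : W) (h : H.Adj u b) (q : H.Walk b u), q.IsPath → 2 ≤ q.length →
      q.length ≤ m → False := by
  intro m
  induction m with
  | zero => intro u b h q hq h2 hm; omega
  | succ m ih =>
    intro u b hadj q hq h2 hm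
    set n := q.length with hn
    -- the closed walk
    set c : H.Walk u u := Walk.cons hadj q with hc
    have hclen : c.length = n + 1 := by simp [hc, hn]
    have hgv0 : c.getVert 0 = u := Walk.getVert_zero c
    have hgvs : ∀ k, c.getVert (k+1) = q.getVert k := fun k => Walk.getVert_cons_succ q hadj
    -- injectivity of c.getVert on [0, n]
    have hinj : ∀ i j, i ≤ n → j ≤ n → c.getVert i = c.getVert j → i = j := by
      have hqu : ∀ k, k ≤ n → q.getVert k = u → k = n := by
        intro k hk hku
        have : q.getVert n = u := by rw [hn]; exact Walk.getVert_length q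
        exact pathGetVertInj hq _ _ hk le_rfl (hku.trans this.symm)
      intro i j hi hj hij
      match i, j with
      | 0, 0 => rfl
      | 0, (j+1) =>
        rw [hgv0, hgvs] at hij
        have := hqu j (by omega) hij.symm
        omega
      | (i+1), 0 =>
        rw [hgv0, hgvs] at hij
        have := hqu i (by omega) hij
        omega
      | (i+1), (j+1) =>
        rw [hgvs, hgvs] at hij
        have := pathGetVertInj hq i j (by omega) (by omega) hij
        omega
    -- case: triangle
    rcases Nat.lt_or_ge n 3 with h3 | h3
    · -- n = 2 : triangle
      have hn2 : n = 2 := by omega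
      have e1 : H.Adj (q.getVert 0) (q.getVert 1) := q.adj_getVert_succ (by omega)
      have e2 : H.Adj (q.getVert 1) (q.getVert 2) := q.adj_getVert_succ (by omega)
      have hq0 : q.getVert 0 = b := Walk.getVert_zero q
      have hq2 : q.getVert 2 = u := by rw [← hn2, hn]; exact Walk.getVert_length q
      have e1' : H.Adj b (q.getVert 1) := by rwa [hq0] at e1
      have e2' : H.Adj (q.getVert 1) u := by rwa [hq2] at e2
      exact htri u b (q.getVert 1) hadj e1' e2'.symm
    -- n ≥ 3
    by_cases hchord : ∃ i j, i < j ∧ j ≤ n ∧ j ≠ i + 1 ∧ ¬(i = 0 ∧ j = n) ∧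
        H.Adj (c.getVert i) (c.getVert j)
    · obtain ⟨i, j, hij, hjn, hne1, hne2, hadj'⟩ := hchord
      rcases Nat.eq_zero_or_pos i with hi0 | hipos
      · -- chord from u = x 0 to x j, 2 ≤ j ≤ n - 1
        subst hi0
        have hjlb : 2 ≤ j := by omega
        have hjub : j ≤ n - 1 := by omega
        set t := c.getVert j with htdef
        have htq : t = q.getVert (j-1) := by
          have hj1 : j - 1 + 1 = j := by omega
          calc t = c.getVert (j-1+1) := by rw [hj1]
          _ = q.getVert (j-1) := hgvs _
        have htmem : t ∈ q.support := by
          rw [Walk.mem_support_iff_exists_getVert]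
          exact ⟨j-1, htq.symm, by omega⟩
        have hlt : (q.takeUntil t htmem).length = j - 1 :=
          takeUntilLength hq (j-1) (by omega) htq.symm htmem
        have hld : (q.dropUntil t htmem).length = n - (j-1) := by
          have := lengthDropUntil q htmem
          omega
        refine ih u t (by rwa [hgv0] at hadj') (q.dropUntil t htmem) (hq.dropUntil htmem)
          (by omega) (by omega)
      · -- inner chord
        set s := c.getVert i with hsdef
        set t := c.getVert j with htdef
        have hsq : s = q.getVert (i-1) := by
          have hi1 : i - 1 + 1 = i := by omega
          calc s = c.getVert (i-1+1) := by rw [hi1]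
          _ = q.getVert (i-1) := hgvs _
        have htq : t = q.getVert (j-1) := by
          have hj1 : j - 1 + 1 = j := by omega
          calc t = c.getVert (j-1+1) := by rw [hj1]
          _ = q.getVert (j-1) := hgvs _
        have htmem : t ∈ q.support := by
          rw [Walk.mem_support_iff_exists_getVert]
          exact ⟨j-1, htq.symm, by omega⟩
        have hlt : (q.takeUntil t htmem).length = j - 1 :=
          takeUntilLength hq (j-1) (by omega) htq.symm htmem
        have hsq' : s = (q.takeUntil t htmem).getVert (i-1) := by
          rw [takeUntilGetVert q htmem (i-1) (by omega)]; exact hsq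
        have hsmem : s ∈ (q.takeUntil t htmem).support := by
          rw [Walk.mem_support_iff_exists_getVert]
          exact ⟨i-1, hsq'.symm, by omega⟩
        have hqt : (q.takeUntil t htmem).IsPath := hq.takeUntil htmem
        have hls : ((q.takeUntil t htmem).takeUntil s hsmem).length = i - 1 :=
          takeUntilLength hqt (i-1) (by omega) hsq'.symm hsmem
        have hld : (((q.takeUntil t htmem)).dropUntil s hsmem).length = (j-1) - (i-1) := by
          have := lengthDropUntil (q.takeUntil t htmem) hsmem
          omega
        exact ih t s hadj'.symm ((q.takeUntil t htmem).dropUntil s hsmem)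
          (hqt.dropUntil hsmem) (by omega) (by omega)
    · -- no chord: induced cycle of length n+1 ≥ 4
      push_neg at hchord
      refine (hind (n+1) (by omega)).false ?_
      refine ⟨⟨fun k => c.getVert k.val, ?_⟩, ?_⟩
      · intro a b' hab
        exact Fin.ext (hinj a.val b'.val (by omega) (by omega) hab)
      · intro a b'
        show H.Adj (c.getVert a.val) (c.getVert b'.val) ↔ (SimpleGraph.cycleGraph (n+1)).Adj a b'
        have ha : a.val ≤ n := by omega
        have hb : b'.val ≤ n := by omega
        have hconsec : ∀ k : ℕ, k ≤ n → H.Adj (c.getVert k) (c.getVert ((k+1) % (n+1))) := by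
          intro k hk
          rcases lt_or_eq_of_le hk with hk' | hk'
          · have : (k+1) % (n+1) = k+1 := Nat.mod_eq_of_lt (by omega)
            rw [this]
            exact c.adj_getVert_succ (by omega)
          · rw [hk', Nat.mod_self, hgv0]
            have h1 : H.Adj (c.getVert n) (c.getVert (n+1)) := c.adj_getVert_succ (by omega)
            have h2 : c.getVert (n+1) = u := by rw [← hclen]; exact Walk.getVert_length c
            rwa [h2] at h1
        constructor
        · intro hAdj
          rw [SimpleGraph.cycleGraph_adj']
          by_contra hcon
          push_neg at hcon
          have key : ∀ i j : ℕ, i < j → j ≤ n → H.Adj (c.getVert i) (c.getVert j) →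
              (j = i + 1 ∨ (i = 0 ∧ j = n)) := by
            intro i j h1 h2 h3
            by_contra hc2
            push_neg at hc2
            exact hchord i j h1 h2 hc2.1 hc2.2 h3
          have hne : a ≠ b' := by
            intro h; rw [h] at hAdj; exact H.irrefl hAdj
          have sub1 : ∀ x y : Fin (n+1), x.val + 1 = y.val → (y - x).val = 1 := by
            intro x y hxy
            rw [Fin.sub_def]
            simp only []
            have : n + 1 - x.val + y.val = (n + 1) + 1 := by omega
            rw [this, Nat.add_mod_left]
            exact Nat.mod_eq_of_lt (by omega)
          have sub2 : ∀ x y : Fin (n+1), x.val = 0 → y.val = n → (x - y).val = 1 := by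
            intro x y hx hy
            rw [Fin.sub_def]
            simp only []
            have : n + 1 - y.val + x.val = 1 := by omega
            rw [this]
            exact Nat.mod_eq_of_lt (by omega)
          rcases Nat.lt_or_ge a.val b'.val with hlt | hge
          · rcases key a.val b'.val hlt hb hAdj with h' | ⟨h1, h2⟩
            · exact hcon.2 (sub1 a b' h'.symm)
            · exact hcon.1 (sub2 a b' h1 h2)
          · have hv : a.val ≠ b'.val := fun h => hne (Fin.ext h)
            have hlt : b'.val < a.val := by omega
            rcases key b'.val a.val hlt ha hAdj.symm with h' | ⟨h1, h2⟩
            · exact hcon.1 (sub1 b' a h'.symm)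
            · exact hcon.2 (sub2 b' a h1 h2)
        · intro hAdj
          rw [SimpleGraph.cycleGraph_adj'] at hAdj
          have step : ∀ x y : Fin (n+1), (y - x).val = 1 → H.Adj (c.getVert x.val) (c.getVert y.val) := by
            intro x y hxy
            have hone : ((1 : Fin (n+1)) : ℕ) = 1 := by
              have h11 : 1 < n + 1 := by omega
              simp [Fin.val_one', Nat.mod_eq_of_lt h11]
            have hyx : y - x = 1 := Fin.ext (by rw [hxy, hone])
            have h1 : y = x + 1 := (sub_eq_iff_eq_add.mp hyx).trans (add_comm 1 x)
            have h2 : y.val = (x.val + 1) % (n+1) := by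
              rw [h1, Fin.val_add, hone]
            rw [h2]
            exact hconsec x.val (by omega)
          rcases hAdj with h' | h'
          · exact (step b' a h').symm
          · exact step a b' h' 

theorem acyclicOfNoInduced
    (htri : ∀ x y z : W, H.Adj x y → H.Adj y z → H.Adj x z → False)
    (hind : ∀ n, 4 ≤ n → IsEmpty (SimpleGraph.cycleGraph n ↪g H)) :
    H.IsAcyclic := by
  intro v p hp
  cases p with
  | nil => exact Walk.IsCycle.not_of_nil hp
  | cons h q =>
    have hq : q.IsPath := by
      rw [Walk.isPath_def]
      have := hp.support_nodup
      rwa [Walk.support_cons, List.tail_cons] at this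
    have h3 : 3 ≤ q.length + 1 := by
      have := hp.three_le_length
      simpa using this
    exact noCycleConfig htri hind q.length v _ h q hq (by omega) le_rfl

end WalkAux










variable {VT : Type} {T : SimpleGraph VT} {w : T.edgeSet → ℕ}

theorem BF_adj_inl_inl {a b : VT} :
    (BFGraph T w).Adj (Sum.inl a) (Sum.inl b) ↔ T.Adj a b := by
  simp only [BFGraph, SimpleGraph.fromRel_adj]
  constructor
  · rintro ⟨hne, (⟨a', b', ha, hb, hadj⟩ | ⟨_, _, _, _, h, _⟩) |
      (⟨a', b', ha, hb, hadj⟩ | ⟨_, _, _, _, h, _⟩)⟩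
    · cases ha; cases hb; exact hadj
    · exact absurd h (by simp)
    · cases ha; cases hb; exact hadj.symm
    · exact absurd h (by simp)
  · intro h
    exact ⟨by simpa using h.ne, Or.inl (Or.inl ⟨a, b, rfl, rfl, h⟩)⟩

theorem BF_adj_inl_inr {a : VT} {e : T.edgeSet} {i : Fin (w e)} :
    (BFGraph T w).Adj (Sum.inl a) (Sum.inr ⟨e, i⟩) ↔ a ∈ (e : Sym2 VT) := by
  simp only [BFGraph, SimpleGraph.fromRel_adj]
  constructor
  · rintro ⟨hne, (⟨a', b', ha, hb, hadj⟩ | ⟨a', e', i', ha, hb, hmem⟩) |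
      (⟨a', b', ha, hb, hadj⟩ | ⟨a', e', i', ha, hb, hmem⟩)⟩
    · exact absurd hb (by simp)
    · cases ha
      obtain ⟨rfl, h2⟩ := by exact Sum.inr.inj hb |> Sigma.mk.inj_iff.mp
      exact hmem
    · exact absurd ha (by simp)
    · exact absurd ha (by simp)
  · intro h
    exact ⟨by simp, Or.inl (Or.inr ⟨a, e, i, rfl, rfl, h⟩)⟩

theorem BF_not_adj_inr_inr {x y : Σ e : T.edgeSet, Fin (w e)} :
    ¬ (BFGraph T w).Adj (Sum.inr x) (Sum.inr y) := by
  simp only [BFGraph, SimpleGraph.fromRel_adj]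
  rintro ⟨hne, (⟨a', b', ha, hb, hadj⟩ | ⟨a', e', i', ha, hb, hmem⟩) |
      (⟨a', b', ha, hb, hadj⟩ | ⟨a', e', i', ha, hb, hmem⟩)⟩ <;>
    first | exact absurd ha (by simp) | exact absurd hb (by simp)

theorem tree_no_triangle (hT : T.IsAcyclic) {a b c : VT}
    (hab : T.Adj a b) (hbc : T.Adj b c) (hac : T.Adj a c) : False := by
  have hcyc : (SimpleGraph.Walk.cons hab (SimpleGraph.Walk.cons hbc
      (SimpleGraph.Walk.cons hac.symm SimpleGraph.Walk.nil))).IsCycle := by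
    rw [SimpleGraph.Walk.isCycle_def]
    refine ⟨?_, by simp, ?_⟩
    · rw [SimpleGraph.Walk.isTrail_def]
      simp only [SimpleGraph.Walk.edges_cons, SimpleGraph.Walk.edges_nil]
      have h1 : a ≠ b := hab.ne
      have h2 : b ≠ c := hbc.ne
      have h3 : a ≠ c := hac.ne
      simp [Sym2.eq, Sym2.rel_iff', List.nodup_cons]
      tauto
    · simp only [SimpleGraph.Walk.support_cons, SimpleGraph.Walk.support_nil, List.tail_cons]
      have h1 : a ≠ b := hab.ne
      have h2 : b ≠ c := hbc.ne
      have h3 : a ≠ c := hac.ne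
      simp [List.nodup_cons]
      tauto
  exact hT _ hcyc

/-- in `BF(T,w)` (T a tree), every triangle has a vertex whose only neighbors are
the other two vertices. -/
theorem BF_triangle_tip (hT : T.IsAcyclic) {p q r : VT ⊕ (Σ e : T.edgeSet, Fin (w e))}
    (hpq : (BFGraph T w).Adj p q) (hqr : (BFGraph T w).Adj q r)
    (hpr : (BFGraph T w).Adj p r) :
    (∀ s, (BFGraph T w).Adj p s → s = q ∨ s = r) ∨
    (∀ s, (BFGraph T w).Adj q s → s = p ∨ s = r) ∨
    (∀ s, (BFGraph T w).Adj r s → s = p ∨ s = q) := by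
  -- helper: a tip's neighbors
  have tipNbr : ∀ (e : T.edgeSet) (i : Fin (w e)) (y z : VT), (e : Sym2 VT) = s(y, z) →
      ∀ s, (BFGraph T w).Adj (Sum.inr ⟨e, i⟩) s → s = Sum.inl y ∨ s = Sum.inl z := by
    rintro e i y z he s hs
    cases s with
    | inl a =>
      have : a ∈ (e : Sym2 VT) := BF_adj_inl_inr.mp hs.symm
      rw [he, Sym2.mem_iff] at this
      rcases this with rfl | rfl
      · exact Or.inl rfl
      · exact Or.inr rfl
    | inr x =>
      exact absurd hs (by obtain ⟨e', i'⟩ := x; exact BF_not_adj_inr_inr)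
  cases p with
  | inr x =>
    obtain ⟨e, i⟩ := x
    cases q with
    | inr y => exact absurd hpq (by obtain ⟨e', i'⟩ := y; exact BF_not_adj_inr_inr)
    | inl qa =>
      cases r with
      | inr z => exact absurd hpr (by obtain ⟨e', i'⟩ := z; exact BF_not_adj_inr_inr)
      | inl ra =>
        -- p is the tip
        left
        have hq : qa ∈ (e : Sym2 VT) := BF_adj_inl_inr.mp hpq.symm
        have hr : ra ∈ (e : Sym2 VT) := BF_adj_inl_inr.mp hpr.symm
        have hne : qa ≠ ra := by
          intro h; subst h; exact (BFGraph T w).irrefl hqr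
        have he : (e : Sym2 VT) = s(qa, ra) := (Sym2.mem_and_mem_iff hne).mp ⟨hq, hr⟩
        intro s hs
        rcases tipNbr e i qa ra he s hs with h | h
        · exact Or.inl h
        · exact Or.inr h
  | inl pa =>
    cases q with
    | inr x =>
      obtain ⟨e, i⟩ := x
      cases r with
      | inr z => exact absurd hqr (by obtain ⟨e', i'⟩ := z; exact BF_not_adj_inr_inr)
      | inl ra =>
        right; left
        have hp : pa ∈ (e : Sym2 VT) := BF_adj_inl_inr.mp hpq
        have hr : ra ∈ (e : Sym2 VT) := BF_adj_inl_inr.mp hqr.symm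
        have hne : pa ≠ ra := (BF_adj_inl_inl.mp hpr).ne
        have he : (e : Sym2 VT) = s(pa, ra) := (Sym2.mem_and_mem_iff hne).mp ⟨hp, hr⟩
        intro s hs
        rcases tipNbr e i pa ra he s hs with h | h
        · exact Or.inl h
        · exact Or.inr h
    | inl qa =>
      cases r with
      | inr z =>
        obtain ⟨e, i⟩ := z
        right; right
        have hp : pa ∈ (e : Sym2 VT) := BF_adj_inl_inr.mp hpr
        have hq : qa ∈ (e : Sym2 VT) := BF_adj_inl_inr.mp hqr
        have hne : pa ≠ qa := (BF_adj_inl_inl.mp hpq).ne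
        have he : (e : Sym2 VT) = s(pa, qa) := (Sym2.mem_and_mem_iff hne).mp ⟨hp, hq⟩
        intro s hs
        rcases tipNbr e i pa qa he s hs with h | h
        · exact Or.inl h
        · exact Or.inr h
      | inl ra =>
        exact absurd (tree_no_triangle hT (BF_adj_inl_inl.mp hpq)
          (BF_adj_inl_inl.mp hqr) (BF_adj_inl_inl.mp hpr)) (by simp)


section Forbidden
variable {VT : Type} {T : SimpleGraph VT} {w : T.edgeSet → ℕ}

theorem BF_K4_free (hT : T.IsAcyclic) : IsEmpty ((⊤ : SimpleGraph (Fin 4)) ↪g BFGraph T w) := by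
  constructor
  intro f
  have h01 : (BFGraph T w).Adj (f 0) (f 1) := f.map_rel_iff.mpr (by decide)
  have h12 : (BFGraph T w).Adj (f 1) (f 2) := f.map_rel_iff.mpr (by decide)
  have h02 : (BFGraph T w).Adj (f 0) (f 2) := f.map_rel_iff.mpr (by decide)
  have h03 : (BFGraph T w).Adj (f 0) (f 3) := f.map_rel_iff.mpr (by decide)
  have h13 : (BFGraph T w).Adj (f 1) (f 3) := f.map_rel_iff.mpr (by decide)
  have h23 : (BFGraph T w).Adj (f 2) (f 3) := f.map_rel_iff.mpr (by decide)
  rcases BF_triangle_tip hT h01 h12 h02 with h | h | h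
  · rcases h _ h03 with h' | h' <;> [exact absurd (f.injective h') (by decide);
      exact absurd (f.injective h') (by decide)]
  · rcases h _ h13 with h' | h' <;> [exact absurd (f.injective h') (by decide);
      exact absurd (f.injective h') (by decide)]
  · rcases h _ h23 with h' | h' <;> [exact absurd (f.injective h') (by decide);
      exact absurd (f.injective h') (by decide)]

theorem BF_gem_free (hT : T.IsAcyclic) : IsEmpty (gem ↪g BFGraph T w) := by
  constructor
  intro f
  have h12 : (BFGraph T w).Adj (f 1) (f 2) := f.map_rel_iff.mpr (by simp [gem, SimpleGraph.fromEdgeSet_adj])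
  have h24 : (BFGraph T w).Adj (f 2) (f 4) := f.map_rel_iff.mpr (by simp [gem, SimpleGraph.fromEdgeSet_adj])
  have h14 : (BFGraph T w).Adj (f 1) (f 4) := f.map_rel_iff.mpr (by simp [gem, SimpleGraph.fromEdgeSet_adj])
  have h10 : (BFGraph T w).Adj (f 1) (f 0) := f.map_rel_iff.mpr (by simp [gem, SimpleGraph.fromEdgeSet_adj])
  have h23 : (BFGraph T w).Adj (f 2) (f 3) := f.map_rel_iff.mpr (by simp [gem, SimpleGraph.fromEdgeSet_adj])
  have h40 : (BFGraph T w).Adj (f 4) (f 0) := f.map_rel_iff.mpr (by simp [gem, SimpleGraph.fromEdgeSet_adj])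
  rcases BF_triangle_tip hT h12 h24 h14 with h | h | h
  · rcases h _ h10 with h' | h' <;> [exact absurd (f.injective h') (by decide);
      exact absurd (f.injective h') (by decide)]
  · rcases h _ h23 with h' | h' <;> [exact absurd (f.injective h') (by decide);
      exact absurd (f.injective h') (by decide)]
  · rcases h _ h40 with h' | h' <;> [exact absurd (f.injective h') (by decide);
      exact absurd (f.injective h') (by decide)]

theorem BF_kite_free (hT : T.IsAcyclic) : IsEmpty (kite ↪g BFGraph T w) := by
  constructor
  intro f
  have h01 : (BFGraph T w).Adj (f 0) (f 1) := f.map_rel_iff.mpr (by simp [kite, SimpleGraph.fromEdgeSet_adj])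
  have h12 : (BFGraph T w).Adj (f 1) (f 2) := f.map_rel_iff.mpr (by simp [kite, SimpleGraph.fromEdgeSet_adj])
  have h02 : (BFGraph T w).Adj (f 0) (f 2) := f.map_rel_iff.mpr (by simp [kite, SimpleGraph.fromEdgeSet_adj])
  have h03 : (BFGraph T w).Adj (f 0) (f 3) := f.map_rel_iff.mpr (by simp [kite, SimpleGraph.fromEdgeSet_adj])
  have h13 : (BFGraph T w).Adj (f 1) (f 3) := f.map_rel_iff.mpr (by simp [kite, SimpleGraph.fromEdgeSet_adj])
  have h24 : (BFGraph T w).Adj (f 2) (f 4) := f.map_rel_iff.mpr (by simp [kite, SimpleGraph.fromEdgeSet_adj])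
  rcases BF_triangle_tip hT h01 h12 h02 with h | h | h
  · rcases h _ h03 with h' | h' <;> [exact absurd (f.injective h') (by decide);
      exact absurd (f.injective h') (by decide)]
  · rcases h _ h13 with h' | h' <;> [exact absurd (f.injective h') (by decide);
      exact absurd (f.injective h') (by decide)]
  · rcases h _ h24 with h' | h' <;> [exact absurd (f.injective h') (by decide);
      exact absurd (f.injective h') (by decide)]

theorem BF_net_free (hT : T.IsAcyclic) : IsEmpty (net ↪g BFGraph T w) := by
  constructor
  intro f
  have h01 : (BFGraph T w).Adj (f 0) (f 1) := f.map_rel_iff.mpr (by simp [net, SimpleGraph.fromEdgeSet_adj])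
  have h12 : (BFGraph T w).Adj (f 1) (f 2) := f.map_rel_iff.mpr (by simp [net, SimpleGraph.fromEdgeSet_adj])
  have h02 : (BFGraph T w).Adj (f 0) (f 2) := f.map_rel_iff.mpr (by simp [net, SimpleGraph.fromEdgeSet_adj])
  have h03 : (BFGraph T w).Adj (f 0) (f 3) := f.map_rel_iff.mpr (by simp [net, SimpleGraph.fromEdgeSet_adj])
  have h14 : (BFGraph T w).Adj (f 1) (f 4) := f.map_rel_iff.mpr (by simp [net, SimpleGraph.fromEdgeSet_adj])
  have h25 : (BFGraph T w).Adj (f 2) (f 5) := f.map_rel_iff.mpr (by simp [net, SimpleGraph.fromEdgeSet_adj])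
  rcases BF_triangle_tip hT h01 h12 h02 with h | h | h
  · rcases h _ h03 with h' | h' <;> [exact absurd (f.injective h') (by decide);
      exact absurd (f.injective h') (by decide)]
  · rcases h _ h14 with h' | h' <;> [exact absurd (f.injective h') (by decide);
      exact absurd (f.injective h') (by decide)]
  · rcases h _ h25 with h' | h' <;> [exact absurd (f.injective h') (by decide);
      exact absurd (f.injective h') (by decide)]

end Forbidden








variable {W : Type*} {G : SimpleGraph W}

def buildEmb {n : ℕ} (F : SimpleGraph (Fin n)) (f : Fin n → W)
    (hinj : ∀ i j : Fin n, i ≠ j → f i ≠ f j)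
    (hiff : ∀ i j, G.Adj (f i) (f j) ↔ F.Adj i j) : F ↪g G :=
  ⟨⟨f, fun i j h => by_contra fun hne => hinj i j hne h⟩, hiff _ _⟩

theorem K4lem (hK4 : IsEmpty ((⊤ : SimpleGraph (Fin 4)) ↪g G))
    {a b c x : W} (hab : G.Adj a b) (hbc : G.Adj b c) (hac : G.Adj a c)
    (hxa : G.Adj x a) (hxb : G.Adj x b) (hxc : G.Adj x c) : False := by
  have hba := hab.symm; have hcb := hbc.symm; have hca := hac.symm
  have hax := hxa.symm; have hbx := hxb.symm; have hcx := hxc.symm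
  have eab := hab.ne; have ebc := hbc.ne; have eac := hac.ne
  have exa := hxa.ne; have exb := hxb.ne; have exc := hxc.ne
  have eba := hab.ne'; have ecb := hbc.ne'; have eca := hac.ne'
  have eax := hxa.ne'; have ebx := hxb.ne'; have ecx := hxc.ne' 
  have i0 : ¬G.Adj a a := G.irrefl
  have i1 : ¬G.Adj b b := G.irrefl
  have i2 : ¬G.Adj c c := G.irrefl
  have i3 : ¬G.Adj x x := G.irrefl
  apply hK4.false
  refine buildEmb _ ![a, b, c, x] ?_ ?_
  · intro i j hij
    fin_cases i <;> fin_cases j <;>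
      simp only [Matrix.cons_val_zero, Matrix.cons_val_one, Matrix.head_cons,
        Matrix.cons_val_two, Matrix.tail_cons, Matrix.cons_val_three, Matrix.cons_val_fin_one,
        Matrix.cons_val_succ, ne_eq] <;>
      first
        | exact absurd rfl hij
        | assumption
  · intro i j
    fin_cases i <;> fin_cases j <;>
      simp only [Matrix.cons_val_zero, Matrix.cons_val_one, Matrix.head_cons,
        Matrix.cons_val_two, Matrix.tail_cons, Matrix.cons_val_three, Matrix.cons_val_fin_one,
        Matrix.cons_val_succ] <;>
      first
        | exact iff_of_true (by assumption) (by decide)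
        | exact iff_of_false (by assumption) (by decide)

theorem C4lem (hC4 : IsEmpty (SimpleGraph.cycleGraph 4 ↪g G))
    {p0 p1 p2 p3 : W} (h01 : G.Adj p0 p1) (h12 : G.Adj p1 p2) (h23 : G.Adj p2 p3)
    (h03 : G.Adj p0 p3) (n02 : ¬G.Adj p0 p2) (n13 : ¬G.Adj p1 p3)
    (d02 : p0 ≠ p2) (d13 : p1 ≠ p3) : False := by
  have s01 := h01.symm; have s12 := h12.symm; have s23 := h23.symm; have s03 := h03.symm
  have e01 := h01.ne; have e12 := h12.ne; have e23 := h23.ne; have e03 := h03.ne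
  have e10 := h01.ne'; have e21 := h12.ne'; have e32 := h23.ne'; have e30 := h03.ne'
  have dd20 := d02.symm; have dd31 := d13.symm
  have n20 : ¬G.Adj p2 p0 := fun h => n02 h.symm
  have n31 : ¬G.Adj p3 p1 := fun h => n13 h.symm
  have i0 : ¬G.Adj p0 p0 := G.irrefl
  have i1 : ¬G.Adj p1 p1 := G.irrefl
  have i2 : ¬G.Adj p2 p2 := G.irrefl
  have i3 : ¬G.Adj p3 p3 := G.irrefl
  apply hC4.false
  refine buildEmb _ ![p0, p1, p2, p3] ?_ ?_
  · intro i j hij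
    fin_cases i <;> fin_cases j <;>
      simp only [Matrix.cons_val_zero, Matrix.cons_val_one, Matrix.head_cons,
        Matrix.cons_val_two, Matrix.tail_cons, Matrix.cons_val_three, Matrix.cons_val_fin_one,
        Matrix.cons_val_succ, ne_eq] <;>
      first
        | exact absurd rfl hij
        | assumption
  · intro i j
    fin_cases i <;> fin_cases j <;>
      simp only [Matrix.cons_val_zero, Matrix.cons_val_one, Matrix.head_cons,
        Matrix.cons_val_two, Matrix.tail_cons, Matrix.cons_val_three, Matrix.cons_val_fin_one,
        Matrix.cons_val_succ] <;>
      first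
        | exact iff_of_true (by assumption) (by decide)
        | exact iff_of_false (by assumption) (by decide)

theorem gemLem (hF : IsEmpty (gem ↪g G))
    {g0 g1 g2 g3 g4 : W}
    (h01 : G.Adj g0 g1) (h12 : G.Adj g1 g2) (h23 : G.Adj g2 g3) (h04 : G.Adj g0 g4) (h14 : G.Adj g1 g4) (h24 : G.Adj g2 g4) (h34 : G.Adj g3 g4) (n02 : ¬G.Adj g0 g2) (n03 : ¬G.Adj g0 g3) (n13 : ¬G.Adj g1 g3) (d02 : g0 ≠ g2) (d03 : g0 ≠ g3) (d13 : g1 ≠ g3) : False := by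
  have s01 := h01.symm
  have e01 : g0 ≠ g1 := h01.ne
  have e10 : g1 ≠ g0 := h01.ne'
  have s12 := h12.symm
  have e12 : g1 ≠ g2 := h12.ne
  have e21 : g2 ≠ g1 := h12.ne'
  have s23 := h23.symm
  have e23 : g2 ≠ g3 := h23.ne
  have e32 : g3 ≠ g2 := h23.ne'
  have s04 := h04.symm
  have e04 : g0 ≠ g4 := h04.ne
  have e40 : g4 ≠ g0 := h04.ne'
  have s14 := h14.symm
  have e14 : g1 ≠ g4 := h14.ne
  have e41 : g4 ≠ g1 := h14.ne'
  have s24 := h24.symm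
  have e24 : g2 ≠ g4 := h24.ne
  have e42 : g4 ≠ g2 := h24.ne'
  have s34 := h34.symm
  have e34 : g3 ≠ g4 := h34.ne
  have e43 : g4 ≠ g3 := h34.ne'
  have m02 : ¬G.Adj g2 g0 := fun h => n02 h.symm
  have dd20 : g2 ≠ g0 := d02.symm
  have m03 : ¬G.Adj g3 g0 := fun h => n03 h.symm
  have dd30 : g3 ≠ g0 := d03.symm
  have m13 : ¬G.Adj g3 g1 := fun h => n13 h.symm
  have dd31 : g3 ≠ g1 := d13.symm
  have i0 : ¬G.Adj g0 g0 := G.irrefl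
  have i1 : ¬G.Adj g1 g1 := G.irrefl
  have i2 : ¬G.Adj g2 g2 := G.irrefl
  have i3 : ¬G.Adj g3 g3 := G.irrefl
  have i4 : ¬G.Adj g4 g4 := G.irrefl
  apply hF.false
  refine buildEmb _ ![g0, g1, g2, g3, g4] ?_ ?_
  · intro i j hij
    fin_cases i <;> fin_cases j <;>
      simp only [Matrix.cons_val_zero, Matrix.cons_val_one, Matrix.head_cons,
        Matrix.cons_val_two, Matrix.tail_cons, Matrix.cons_val_three, Matrix.cons_val_fin_one,
        Matrix.cons_val_succ, ne_eq] <;>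
      first
        | exact absurd rfl hij
        | assumption
  · intro i j
    fin_cases i <;> fin_cases j <;>
      simp only [Matrix.cons_val_zero, Matrix.cons_val_one, Matrix.head_cons,
        Matrix.cons_val_two, Matrix.tail_cons, Matrix.cons_val_three, Matrix.cons_val_fin_one,
        Matrix.cons_val_succ] <;>
      first
        | exact iff_of_true (by assumption) (by simp [gem, SimpleGraph.fromEdgeSet_adj])
        | exact iff_of_false (by assumption) (by simp [gem, SimpleGraph.fromEdgeSet_adj])

theorem kiteLem (hF : IsEmpty (kite ↪g G))
    {g0 g1 g2 g3 g4 : W}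
    (h01 : G.Adj g0 g1) (h02 : G.Adj g0 g2) (h03 : G.Adj g0 g3) (h12 : G.Adj g1 g2) (h13 : G.Adj g1 g3) (h24 : G.Adj g2 g4) (n23 : ¬G.Adj g2 g3) (n04 : ¬G.Adj g0 g4) (n14 : ¬G.Adj g1 g4) (n34 : ¬G.Adj g3 g4) (d23 : g2 ≠ g3) (d04 : g0 ≠ g4) (d14 : g1 ≠ g4) (d34 : g3 ≠ g4) : False := by
  have s01 := h01.symm
  have e01 : g0 ≠ g1 := h01.ne
  have e10 : g1 ≠ g0 := h01.ne'
  have s02 := h02.symm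
  have e02 : g0 ≠ g2 := h02.ne
  have e20 : g2 ≠ g0 := h02.ne'
  have s03 := h03.symm
  have e03 : g0 ≠ g3 := h03.ne
  have e30 : g3 ≠ g0 := h03.ne'
  have s12 := h12.symm
  have e12 : g1 ≠ g2 := h12.ne
  have e21 : g2 ≠ g1 := h12.ne'
  have s13 := h13.symm
  have e13 : g1 ≠ g3 := h13.ne
  have e31 : g3 ≠ g1 := h13.ne'
  have s24 := h24.symm
  have e24 : g2 ≠ g4 := h24.ne
  have e42 : g4 ≠ g2 := h24.ne'
  have m23 : ¬G.Adj g3 g2 := fun h => n23 h.symm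
  have dd32 : g3 ≠ g2 := d23.symm
  have m04 : ¬G.Adj g4 g0 := fun h => n04 h.symm
  have dd40 : g4 ≠ g0 := d04.symm
  have m14 : ¬G.Adj g4 g1 := fun h => n14 h.symm
  have dd41 : g4 ≠ g1 := d14.symm
  have m34 : ¬G.Adj g4 g3 := fun h => n34 h.symm
  have dd43 : g4 ≠ g3 := d34.symm
  have i0 : ¬G.Adj g0 g0 := G.irrefl
  have i1 : ¬G.Adj g1 g1 := G.irrefl
  have i2 : ¬G.Adj g2 g2 := G.irrefl
  have i3 : ¬G.Adj g3 g3 := G.irrefl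
  have i4 : ¬G.Adj g4 g4 := G.irrefl
  apply hF.false
  refine buildEmb _ ![g0, g1, g2, g3, g4] ?_ ?_
  · intro i j hij
    fin_cases i <;> fin_cases j <;>
      simp only [Matrix.cons_val_zero, Matrix.cons_val_one, Matrix.head_cons,
        Matrix.cons_val_two, Matrix.tail_cons, Matrix.cons_val_three, Matrix.cons_val_fin_one,
        Matrix.cons_val_succ, ne_eq] <;>
      first
        | exact absurd rfl hij
        | assumption
  · intro i j
    fin_cases i <;> fin_cases j <;>
      simp only [Matrix.cons_val_zero, Matrix.cons_val_one, Matrix.head_cons,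
        Matrix.cons_val_two, Matrix.tail_cons, Matrix.cons_val_three, Matrix.cons_val_fin_one,
        Matrix.cons_val_succ] <;>
      first
        | exact iff_of_true (by assumption) (by simp [kite, SimpleGraph.fromEdgeSet_adj])
        | exact iff_of_false (by assumption) (by simp [kite, SimpleGraph.fromEdgeSet_adj])

theorem netLem (hF : IsEmpty (net ↪g G))
    {g0 g1 g2 g3 g4 g5 : W}
    (h01 : G.Adj g0 g1) (h12 : G.Adj g1 g2) (h02 : G.Adj g0 g2) (h03 : G.Adj g0 g3) (h14 : G.Adj g1 g4) (h25 : G.Adj g2 g5) (n04 : ¬G.Adj g0 g4) (n05 : ¬G.Adj g0 g5) (n13 : ¬G.Adj g1 g3) (n15 : ¬G.Adj g1 g5) (n23 : ¬G.Adj g2 g3) (n24 : ¬G.Adj g2 g4) (n34 : ¬G.Adj g3 g4) (n35 : ¬G.Adj g3 g5) (n45 : ¬G.Adj g4 g5) (d04 : g0 ≠ g4) (d05 : g0 ≠ g5) (d13 : g1 ≠ g3) (d15 : g1 ≠ g5) (d23 : g2 ≠ g3) (d24 : g2 ≠ g4) (d34 : g3 ≠ g4) (d35 : g3 ≠ g5)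 (d45 : g4 ≠ g5) : False := by
  have s01 := h01.symm
  have e01 : g0 ≠ g1 := h01.ne
  have e10 : g1 ≠ g0 := h01.ne'
  have s12 := h12.symm
  have e12 : g1 ≠ g2 := h12.ne
  have e21 : g2 ≠ g1 := h12.ne'
  have s02 := h02.symm
  have e02 : g0 ≠ g2 := h02.ne
  have e20 : g2 ≠ g0 := h02.ne'
  have s03 := h03.symm
  have e03 : g0 ≠ g3 := h03.ne
  have e30 : g3 ≠ g0 := h03.ne'
  have s14 := h14.symm
  have e14 : g1 ≠ g4 := h14.ne
  have e41 : g4 ≠ g1 := h14.ne'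
  have s25 := h25.symm
  have e25 : g2 ≠ g5 := h25.ne
  have e52 : g5 ≠ g2 := h25.ne'
  have m04 : ¬G.Adj g4 g0 := fun h => n04 h.symm
  have dd40 : g4 ≠ g0 := d04.symm
  have m05 : ¬G.Adj g5 g0 := fun h => n05 h.symm
  have dd50 : g5 ≠ g0 := d05.symm
  have m13 : ¬G.Adj g3 g1 := fun h => n13 h.symm
  have dd31 : g3 ≠ g1 := d13.symm
  have m15 : ¬G.Adj g5 g1 := fun h => n15 h.symm
  have dd51 : g5 ≠ g1 := d15.symm
  have m23 : ¬G.Adj g3 g2 := fun h => n23 h.symm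
  have dd32 : g3 ≠ g2 := d23.symm
  have m24 : ¬G.Adj g4 g2 := fun h => n24 h.symm
  have dd42 : g4 ≠ g2 := d24.symm
  have m34 : ¬G.Adj g4 g3 := fun h => n34 h.symm
  have dd43 : g4 ≠ g3 := d34.symm
  have m35 : ¬G.Adj g5 g3 := fun h => n35 h.symm
  have dd53 : g5 ≠ g3 := d35.symm
  have m45 : ¬G.Adj g5 g4 := fun h => n45 h.symm
  have dd54 : g5 ≠ g4 := d45.symm
  have i0 : ¬G.Adj g0 g0 := G.irrefl
  have i1 : ¬G.Adj g1 g1 := G.irrefl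
  have i2 : ¬G.Adj g2 g2 := G.irrefl
  have i3 : ¬G.Adj g3 g3 := G.irrefl
  have i4 : ¬G.Adj g4 g4 := G.irrefl
  have i5 : ¬G.Adj g5 g5 := G.irrefl
  apply hF.false
  refine buildEmb _ ![g0, g1, g2, g3, g4, g5] ?_ ?_
  · intro i j hij
    fin_cases i <;> fin_cases j <;>
      simp only [Matrix.cons_val_zero, Matrix.cons_val_one, Matrix.head_cons,
        Matrix.cons_val_two, Matrix.tail_cons, Matrix.cons_val_three, Matrix.cons_val_fin_one,
        Matrix.cons_val_succ, ne_eq] <;>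
      first
        | exact absurd rfl hij
        | assumption
  · intro i j
    fin_cases i <;> fin_cases j <;>
      simp only [Matrix.cons_val_zero, Matrix.cons_val_one, Matrix.head_cons,
        Matrix.cons_val_two, Matrix.tail_cons, Matrix.cons_val_three, Matrix.cons_val_fin_one,
        Matrix.cons_val_succ] <;>
      first
        | exact iff_of_true (by assumption) (by simp [net, SimpleGraph.fromEdgeSet_adj])
        | exact iff_of_false (by assumption) (by simp [net, SimpleGraph.fromEdgeSet_adj])


section Core
variable (hK4 : IsEmpty ((⊤ : SimpleGraph (Fin 4)) ↪g G))
  (hgem : IsEmpty (gem ↪g G)) (hkite : IsEmpty (kite ↪g G)) (hnet : IsEmpty (net ↪g G))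
  (hC4 : IsEmpty (SimpleGraph.cycleGraph 4 ↪g G))

include hK4 hgem hkite hC4 in
theorem caseA {a b c d e : W}
    (hab : G.Adj a b) (hbc : G.Adj b c) (hac : G.Adj a c)
    (hda : G.Adj d a) (hdb : G.Adj d b) (ndc : ¬G.Adj d c) (ddc : d ≠ c)
    (hce : G.Adj c e) (dea : e ≠ a) (deb : e ≠ b) : False := by
  have ded : e ≠ d := fun h => ndc (h ▸ hce.symm)
  by_cases hea : G.Adj e a
  · by_cases heb : G.Adj e b
    · exact K4lem hK4 hab hbc hac hea heb hce.symm
    · by_cases hed : G.Adj e d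
      · exact C4lem hC4 hce hed hdb hbc.symm (fun h => ndc h.symm) heb ddc.symm deb
      · exact gemLem hgem hce.symm hbc.symm hdb.symm hea hac.symm hab.symm hda
          heb hed (fun h => ndc h.symm) deb ded ddc.symm
  · by_cases heb : G.Adj e b
    · by_cases hed : G.Adj e d
      · exact C4lem hC4 hce hed hda hac.symm (fun h => ndc h.symm) hea ddc.symm dea
      · exact gemLem hgem hce.symm hac.symm hda.symm heb hbc.symm hab hdb
          hea hed (fun h => ndc h.symm) dea ded ddc.symm
    · by_cases hed : G.Adj e d
      · exact C4lem hC4 hed hda hac hce.symm hea ndc dea ddc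
      · exact kiteLem hkite hab hac hda.symm hbc hdb.symm hce
          (fun h => ndc h.symm) (fun h => hea h.symm) (fun h => heb h.symm)
          (fun h => hed h.symm) ddc.symm dea.symm deb.symm ded.symm

include hC4 hnet in
theorem caseB {a b c a' b' c' : W}
    (hab : G.Adj a b) (hbc : G.Adj b c) (hac : G.Adj a c)
    (ha : G.Adj a a') (hb : G.Adj b b') (hc : G.Adj c c')
    (nab' : ¬G.Adj a b') (nac' : ¬G.Adj a c') (nba' : ¬G.Adj b a') (nbc' : ¬G.Adj b c')
    (nca' : ¬G.Adj c a') (ncb' : ¬G.Adj c b')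
    (da'b : a' ≠ b) (da'c : a' ≠ c) (db'a : b' ≠ a) (db'c : b' ≠ c)
    (dc'a : c' ≠ a) (dc'b : c' ≠ b) : False := by
  have dab' : a ≠ b' := db'a.symm
  have da'b' : a' ≠ b' := fun h => nab' (h ▸ ha)
  have da'c' : a' ≠ c' := fun h => nac' (h ▸ ha)
  have db'c' : b' ≠ c' := fun h => nbc' (h ▸ hb)
  by_cases h1 : G.Adj a' b'
  · exact C4lem hC4 ha h1 hb.symm hab nab' (fun h => nba' h.symm) dab' da'b
  · by_cases h2 : G.Adj a' c'
    · exact C4lem hC4 ha h2 hc.symm hac nac' (fun h => nca' h.symm) dc'a.symm da'c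
    · by_cases h3 : G.Adj b' c'
      · exact C4lem hC4 hb h3 hc.symm hbc nbc' (fun h => ncb' h.symm) dc'b.symm db'c
      · exact netLem hnet hab hbc hac ha hb hc
          nab' nac' nba' nbc' nca' ncb' h1 h2 h3
          dab' dc'a.symm da'b.symm dc'b.symm da'c.symm db'c.symm
          da'b' da'c' db'c'

include hK4 hgem hkite hnet hC4 in
theorem triangle_tip {a b c : W} (hab : G.Adj a b) (hbc : G.Adj b c) (hac : G.Adj a c) :
    (∀ x, G.Adj a x → x = b ∨ x = c) ∨ (∀ x, G.Adj b x → x = a ∨ x = c) ∨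
    (∀ x, G.Adj c x → x = a ∨ x = b) := by
  by_contra h
  push_neg at h
  obtain ⟨⟨a', haa', ha'b, ha'c⟩, ⟨b', hbb', hb'a, hb'c⟩, ⟨c', hcc', hc'a, hc'b⟩⟩ := h
  by_cases h1 : G.Adj a' b
  · by_cases h1' : G.Adj a' c
    · exact K4lem hK4 hab hbc hac haa'.symm h1 h1'
    · exact caseA hK4 hgem hkite hC4 hab hbc hac haa'.symm h1 h1' ha'c hcc' hc'a hc'b
  · by_cases h2 : G.Adj a' c
    · exact caseA hK4 hgem hkite hC4 hac hbc.symm hab haa'.symm h2 h1 ha'b hbb' hb'a hb'c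
    · by_cases h3 : G.Adj b' a
      · by_cases h3' : G.Adj b' c
        · exact K4lem hK4 hab hbc hac h3 hbb'.symm h3'
        · exact caseA hK4 hgem hkite hC4 hab.symm hac hbc hbb'.symm h3 h3' hb'c hcc' hc'b hc'a
      · by_cases h4 : G.Adj b' c
        · exact caseA hK4 hgem hkite hC4 hbc hac.symm hab.symm hbb'.symm h4 h3 hb'a haa' ha'b ha'c
        · by_cases h5 : G.Adj c' a
          · by_cases h5' : G.Adj c' b
            · exact K4lem hK4 hab hbc hac h5 h5' hcc'.symm
            · exact caseA hK4 hgem hkite hC4 hac.symm hab hbc.symm hcc'.symm h5 h5' hc'b hbb' hb'c hb'a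
          · by_cases h6 : G.Adj c' b
            · exact caseA hK4 hgem hkite hC4 hbc.symm hab.symm hac.symm hcc'.symm h6 h5 hc'a haa' ha'c ha'b
            · exact caseB hnet hC4 hab hbc hac haa' hbb' hcc'
                (fun h => h3 h.symm) (fun h => h5 h.symm) (fun h => h1 h.symm)
                (fun h => h6 h.symm) (fun h => h2 h.symm) (fun h => h4 h.symm)
                ha'b ha'c hb'a hb'c hc'a hc'b
end Core

section Main
variable {W : Type} [Fintype W] (G : SimpleGraph W)

/-- an arbitrary injective ranking of the vertices. -/
def rank : W → ℕ := fun v => (Fintype.equivFin W v : ℕ)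

theorem rank_injective : Function.Injective (rank (W := W)) := by
  intro a b h
  exact (Fintype.equivFin W).injective (Fin.ext h)

/-- `v` has exactly two neighbors and they are adjacent. -/
def Cand (v : W) : Prop := ∃ y z, G.Adj y z ∧ G.neighborFinset v = {y, z}

/-- `v` is a triangle tip. -/
def Tip (v : W) : Prop := Cand G v ∧ ∀ u, G.Adj v u → Cand G u → rank v < rank u

variable {G}

theorem tip_nbrs {v : W} (hv : Tip G v) :
    ∃ y z, G.Adj y z ∧ (∀ u, G.Adj v u ↔ (u = y ∨ u = z)) ∧ ¬Tip G y ∧ ¬Tip G z := by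
  obtain ⟨⟨y, z, hyz, hN⟩, hmin⟩ := hv
  have hiff : ∀ u, G.Adj v u ↔ (u = y ∨ u = z) := by
    intro u
    rw [← SimpleGraph.mem_neighborFinset, hN]
    simp
  have hvy : G.Adj v y := (hiff y).mpr (Or.inl rfl)
  have hvz : G.Adj v z := (hiff z).mpr (Or.inr rfl)
  have hcv : Cand G v := ⟨y, z, hyz, hN⟩
  refine ⟨y, z, hyz, hiff, ?_, ?_⟩
  · intro hy
    have h1 := hmin y hvy hy.1
    have h2 := hy.2 v hvy.symm hcv
    omega
  · intro hz
    have h1 := hmin z hvz hz.1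
    have h2 := hz.2 v hvz.symm hcv
    omega

theorem tips_not_adj {v u : W} (hv : Tip G v) (hu : Tip G u) (h : G.Adj v u) : False := by
  have h1 := hv.2 u h hu.1
  have h2 := hu.2 v h.symm hv.1
  omega

theorem exists_nonTip (hne : Nonempty W) (hconn : G.Connected) : ∃ v, ¬ Tip G v := by
  by_contra h
  push_neg at h
  obtain ⟨v⟩ := hne
  obtain ⟨y, z, hyz, hiff, hy, hz⟩ := tip_nbrs (h v)
  exact hy (h y)

/-- every triangle contains a Tip -/
theorem triangle_has_tip
    (hK4 : IsEmpty ((⊤ : SimpleGraph (Fin 4)) ↪g G))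
    (hgem : IsEmpty (gem ↪g G)) (hkite : IsEmpty (kite ↪g G)) (hnet : IsEmpty (net ↪g G))
    (hC4 : IsEmpty (SimpleGraph.cycleGraph 4 ↪g G))
    {a b c : W} (hab : G.Adj a b) (hbc : G.Adj b c) (hac : G.Adj a c) :
    Tip G a ∨ Tip G b ∨ Tip G c := by
  -- candidates within the triangle have nbhd equal to the other two vertices
  have key : ∀ x y z : W, G.Adj x y → G.Adj y z → G.Adj x z →
      (∀ u, G.Adj x u → u = y ∨ u = z) → Cand G x := by
    intro x y z hxy hyz hxz hdeg
    refine ⟨y, z, hyz, ?_⟩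
    ext u
    rw [SimpleGraph.mem_neighborFinset]
    simp only [Finset.mem_insert, Finset.mem_singleton]
    constructor
    · exact hdeg u
    · rintro (rfl | rfl)
      · exact hxy
      · exact hxz
  -- the set of candidate triangle vertices
  have hCne : Cand G a ∨ Cand G b ∨ Cand G c := by
    rcases triangle_tip hK4 hgem hkite hnet hC4 hab hbc hac with h | h | h
    · exact Or.inl (key a b c hab hbc hac h)
    · exact Or.inr (Or.inl (key b a c hab.symm hac hbc h))
    · exact Or.inr (Or.inr (key c a b hac.symm hab hbc.symm h))
  set C : Finset W := ({a, b, c} : Finset W).filter (Cand G) with hC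
  have hCnonempty : C.Nonempty := by
    rcases hCne with h | h | h
    · exact ⟨a, by simp [hC, h]⟩
    · exact ⟨b, by simp [hC, h]⟩
    · exact ⟨c, by simp [hC, h]⟩
  obtain ⟨x, hxC, hxmin⟩ := C.exists_min_image (rank) hCnonempty
  have hxcand : Cand G x := (Finset.mem_filter.mp hxC).2
  have hxabc : x = a ∨ x = b ∨ x = c := by
    have := (Finset.mem_filter.mp hxC).1
    simpa using this
  -- x's neighbors are the other two triangle vertices
  have hnbr : ∀ u, G.Adj x u → (u = a ∨ u = b ∨ u = c) ∧ u ≠ x := by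
    intro u hu
    obtain ⟨y, z, hyz, hN⟩ := hxcand
    have hmem : ∀ w, G.Adj x w ↔ (w = y ∨ w = z) := by
      intro w
      rw [← SimpleGraph.mem_neighborFinset, hN]
      simp
    -- the other two triangle vertices are neighbors of x, and x has only 2 nbrs
    have h2 : ∀ p q : W, G.Adj x p → G.Adj x q → p ≠ q → ∀ w, G.Adj x w → w = p ∨ w = q := by
      intro p q hp hq hpq w hw
      rcases (hmem p).mp hp with rfl | rfl <;> rcases (hmem q).mp hq with h' | h' <;>
        rcases (hmem w).mp hw with rfl | rfl <;> tauto
    constructor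
    · rcases hxabc with rfl | rfl | rfl
      · rcases h2 b c hab hac hbc.ne u hu with rfl | rfl <;> tauto
      · rcases h2 a c hab.symm hbc hac.ne u hu with rfl | rfl <;> tauto
      · rcases h2 a b hac.symm hbc.symm hab.ne u hu with rfl | rfl <;> tauto
    · exact fun h => G.irrefl (h ▸ hu)
  have hxtip : Tip G x := by
    refine ⟨hxcand, ?_⟩
    intro u hu hcu
    have h1 := hnbr u hu
    have huC : u ∈ C := by
      rw [hC, Finset.mem_filter]
      refine ⟨?_, hcu⟩
      simp only [Finset.mem_insert, Finset.mem_singleton]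
      tauto
    have := hxmin u huC
    have hne : rank x ≠ rank u := fun h => h1.2 (rank_injective h).symm
    omega
  rcases hxabc with rfl | rfl | rfl <;> tauto

variable (G) in
/-- the induced graph on non-tips. -/
def Tgraph : SimpleGraph {v : W // ¬ Tip G v} := SimpleGraph.comap Subtype.val G

theorem Tgraph_adj {a b : {v : W // ¬ Tip G v}} :
    (Tgraph G).Adj a b ↔ G.Adj a.val b.val := Iff.rfl

theorem reach_nonTip (n : ℕ) : ∀ (x y : W) (hx : ¬Tip G x) (hy : ¬Tip G y)
    (p : G.Walk x y), p.length ≤ n → (Tgraph G).Reachable ⟨x, hx⟩ ⟨y, hy⟩ := by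
  induction n with
  | zero =>
    intro x y hx hy p hp
    have := p.eq_of_length_eq_zero (Nat.le_zero.mp hp)
    subst this
    exact SimpleGraph.Reachable.refl _
  | succ n ih =>
    intro x y hx hy p hp
    cases p with
    | nil => exact SimpleGraph.Reachable.refl _
    | cons h q =>
      rename_i u
      by_cases hu : Tip G u
      · obtain ⟨y1, z1, hyz, hiff, hy1, hz1⟩ := tip_nbrs hu
        have hx12 : x = y1 ∨ x = z1 := (hiff x).mp h.symm
        cases q with
        | nil => exact absurd hu hy
        | cons h2 q2 =>
          rename_i u2
          have hu2 : u2 = y1 ∨ u2 = z1 := (hiff u2).mp h2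
          have hlen : q2.length ≤ n := by
            simp only [SimpleGraph.Walk.length_cons] at hp
            omega
          by_cases he : u2 = x
          · subst he
            exact ih u2 y hx hy q2 hlen
          · have hu2nt : ¬Tip G u2 := by
              rcases hu2 with rfl | rfl
              · exact hy1
              · exact hz1
            have hxu2 : G.Adj x u2 := by
              rcases hx12 with rfl | rfl <;> rcases hu2 with h' | h'
              · exact absurd h'.symm (by intro hh; exact he hh.symm)
              · rw [h']; exact hyz
              · rw [h']; exact hyz.symm
              · exact absurd h'.symm (by intro hh; exact he hh.symm)
            have hadj : (Tgraph G).Adj ⟨x, hx⟩ ⟨u2, hu2nt⟩ := hxu2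
            exact (hadj.reachable).trans (ih u2 y hu2nt hy q2 hlen)
      · have hadj : (Tgraph G).Adj ⟨x, hx⟩ ⟨u, hu⟩ := h
        have hlen : q.length ≤ n := by
          simp only [SimpleGraph.Walk.length_cons] at hp
          omega
        exact (hadj.reachable).trans (ih u y hu hy q hlen)

theorem Tgraph_connected (hconn : G.Connected) : (Tgraph G).Connected := by
  obtain ⟨v, hv⟩ := exists_nonTip hconn.nonempty hconn
  have : Nonempty {v : W // ¬ Tip G v} := ⟨⟨v, hv⟩⟩
  refine SimpleGraph.Connected.mk ?_
  intro a b
  obtain ⟨p⟩ := hconn.preconnected a.val b.val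
  exact reach_nonTip p.length a.val b.val a.2 b.2 p le_rfl

theorem Tgraph_isTree
    (hK4 : IsEmpty ((⊤ : SimpleGraph (Fin 4)) ↪g G))
    (hgem : IsEmpty (gem ↪g G)) (hkite : IsEmpty (kite ↪g G)) (hnet : IsEmpty (net ↪g G))
    (hchordal : Chordal G) (hconn : G.Connected) : (Tgraph G).IsTree := by
  have hemb : Tgraph G ↪g G := SimpleGraph.Embedding.comap (Function.Embedding.subtype _) G
  have hind : ∀ n, 4 ≤ n → IsEmpty (SimpleGraph.cycleGraph n ↪g Tgraph G) := by
    intro n hn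
    constructor
    intro f
    exact (hchordal n hn).false (hemb.comp f)
  have htri : ∀ x y z : {v : W // ¬ Tip G v}, (Tgraph G).Adj x y → (Tgraph G).Adj y z →
      (Tgraph G).Adj x z → False := by
    intro x y z hxy hyz hxz
    rcases triangle_has_tip hK4 hgem hkite hnet (hchordal 4 le_rfl) hxy hyz hxz with h | h | h
    · exact x.2 h
    · exact y.2 h
    · exact z.2 h
  exact ⟨Tgraph_connected hconn, acyclicOfNoInduced htri hind⟩

def tipY {v : W} (hv : Tip G v) : W := (tip_nbrs hv).choose
def tipZ {v : W} (hv : Tip G v) : W := (tip_nbrs hv).choose_spec.choose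

theorem tip_spec {v : W} (hv : Tip G v) :
    G.Adj (tipY hv) (tipZ hv) ∧ (∀ u, G.Adj v u ↔ (u = tipY hv ∨ u = tipZ hv)) ∧
    ¬Tip G (tipY hv) ∧ ¬Tip G (tipZ hv) := (tip_nbrs hv).choose_spec.choose_spec

variable (G) in
def eT : {v : W // Tip G v} → (Tgraph G).edgeSet := fun t =>
  ⟨s(⟨tipY t.2, (tip_spec t.2).2.2.1⟩, ⟨tipZ t.2, (tip_spec t.2).2.2.2⟩),
    (Tgraph G).mem_edgeSet.mpr ((tip_spec t.2).1)⟩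

variable (G) in
def wfun : (Tgraph G).edgeSet → ℕ := fun e => Fintype.card {t : {v : W // Tip G v} // eT G t = e}

variable (G) in
def fibEquiv (e : (Tgraph G).edgeSet) :
    {t : {v : W // Tip G v} // eT G t = e} ≃ Fin (wfun G e) := Fintype.equivFin _

variable (G) in
def phi : W → ({v : W // ¬ Tip G v} ⊕ (Σ e : (Tgraph G).edgeSet, Fin (wfun G e))) :=
  fun v => if h : Tip G v then Sum.inr ⟨eT G ⟨v, h⟩, fibEquiv G _ ⟨⟨v, h⟩, rfl⟩⟩
    else Sum.inl ⟨v, h⟩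

variable (G) in
def psi : ({v : W // ¬ Tip G v} ⊕ (Σ e : (Tgraph G).edgeSet, Fin (wfun G e))) → W :=
  fun s => match s with
    | Sum.inl a => a.val
    | Sum.inr ⟨e, i⟩ => (((fibEquiv G e).symm i).val : {v : W // Tip G v}).val

theorem psi_phi : Function.LeftInverse (psi G) (phi G) := by
  intro v
  by_cases h : Tip G v
  · simp only [phi, dif_pos h, psi]
    rw [Equiv.symm_apply_apply]
  · simp only [phi, dif_neg h, psi]

theorem phi_psi : Function.RightInverse (psi G) (phi G) := by
  rintro (a | ⟨e, i⟩)
  · simp only [psi, phi, dif_neg a.2]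
    exact dif_neg a.2
  · simp only [psi]
    have hti : fibEquiv G e ((fibEquiv G e).symm i) = i := Equiv.apply_symm_apply _ _
    rcases h' : (fibEquiv G e).symm i with ⟨tv, hte⟩
    rw [h'] at hti
    subst hte
    simp only [phi, dif_pos tv.2]
    rw [← hti]

variable (G) in
def phiEquiv : W ≃ ({v : W // ¬ Tip G v} ⊕ (Σ e : (Tgraph G).edgeSet, Fin (wfun G e))) :=
  ⟨phi G, psi G, psi_phi, phi_psi⟩

theorem phi_tip {v : W} (h : Tip G v) :
    phi G v = Sum.inr ⟨eT G ⟨v, h⟩, fibEquiv G _ ⟨⟨v, h⟩, rfl⟩⟩ := by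
  simp only [phi, dif_pos h]

theorem phi_nontip {v : W} (h : ¬ Tip G v) : phi G v = Sum.inl ⟨v, h⟩ := by
  simp only [phi, dif_neg h]

theorem eT_coe {v : W} (hv : Tip G v) :
    ((eT G ⟨v, hv⟩ : (Tgraph G).edgeSet) : Sym2 {x : W // ¬Tip G x}) =
      s(⟨tipY hv, (tip_spec hv).2.2.1⟩, ⟨tipZ hv, (tip_spec hv).2.2.2⟩) := rfl

theorem mem_eT {u v : W} (hv : Tip G v) (hu : ¬ Tip G u) :
    (⟨u, hu⟩ : {x : W // ¬Tip G x}) ∈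
      ((eT G ⟨v, hv⟩ : (Tgraph G).edgeSet) : Sym2 {x : W // ¬Tip G x}) ↔ G.Adj v u := by
  rw [eT_coe hv, Sym2.mem_iff, Subtype.mk.injEq, Subtype.mk.injEq]
  exact ((tip_spec hv).2.1 u).symm

theorem phi_adj (u v : W) :
    (BFGraph (Tgraph G) (wfun G)).Adj (phi G u) (phi G v) ↔ G.Adj u v := by
  by_cases hu : Tip G u <;> by_cases hv : Tip G v
  · rw [phi_tip hu, phi_tip hv]
    constructor
    · intro h; exact absurd h BF_not_adj_inr_inr
    · intro h; exact absurd (tips_not_adj hu hv h) (by simp)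
  · rw [phi_tip hu, phi_nontip hv, SimpleGraph.adj_comm, BF_adj_inl_inr, mem_eT hu hv,
      G.adj_comm]
  · rw [phi_nontip hu, phi_tip hv, BF_adj_inl_inr, mem_eT hv hu, G.adj_comm]
  · rw [phi_nontip hu, phi_nontip hv, BF_adj_inl_inl]
    exact Iff.rfl

theorem backward_main
    (hK4 : IsEmpty ((⊤ : SimpleGraph (Fin 4)) ↪g G))
    (hgem : IsEmpty (gem ↪g G)) (hkite : IsEmpty (kite ↪g G)) (hnet : IsEmpty (net ↪g G))
    (hchordal : Chordal G) (hconn : G.Connected) :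
    ∃ (VT : Type) (_ : Fintype VT) (T : SimpleGraph VT) (_ : T.IsTree)
        (w : T.edgeSet → ℕ), Nonempty (G ≃g BFGraph T w) := by
  refine ⟨{v : W // ¬ Tip G v}, inferInstance, Tgraph G,
    Tgraph_isTree hK4 hgem hkite hnet hchordal hconn, wfun G, ⟨?_⟩⟩
  exact ⟨phiEquiv G, phi_adj _ _⟩
end Main


/-- **Proposition 4.8.** A finite connected chordal simple graph is isomorphic to
`BF(T,w)` iff it contains none of `K₄`, gem, kite, net as an induced subgraph. -/
theorem isoBF_iff_forbidden {V : Type} [Fintype V] (G : SimpleGraph V)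
    (hconn : G.Connected) (hchordal : Chordal G) :
    (∃ (VT : Type) (_ : Fintype VT) (T : SimpleGraph VT) (_ : T.IsTree)
        (w : T.edgeSet → ℕ), Nonempty (G ≃g BFGraph T w)) ↔
      (IsEmpty ((⊤ : SimpleGraph (Fin 4)) ↪g G) ∧
       IsEmpty (gem ↪g G) ∧
       IsEmpty (kite ↪g G) ∧
       IsEmpty (net ↪g G)) := by
  constructor
  · rintro ⟨VT, _, T, hT, w, ⟨iso⟩⟩
    refine ⟨⟨fun f => ?_⟩, ⟨fun f => ?_⟩, ⟨fun f => ?_⟩, ⟨fun f => ?_⟩⟩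
    · exact (BF_K4_free hT.2).false (iso.toEmbedding.comp f)
    · exact (BF_gem_free hT.2).false (iso.toEmbedding.comp f)
    · exact (BF_kite_free hT.2).false (iso.toEmbedding.comp f)
    · exact (BF_net_free hT.2).false (iso.toEmbedding.comp f)
  · rintro ⟨h1, h2, h3, h4⟩
    exact backward_main h1 h2 h3 h4 hchordal hconn

end ChauHaMaithani
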